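/- (Platonov–Tavgen criterion.) Let 1 → N → H → Q → 1 be an exact sequence of groups in which N, H and Q are all finitely generated, and let P ≤ H × H be the associated fibre product. Suppose that the second group homology H₂(Q, ℤ) (with trivial ℤ-coefficients) vanishes and that Q has no nontrivial finite quotients. Then for every finite group F, the restriction map Hom(H × H, F) → Hom(P, F) given by precomposition with the inclusion P ↪ H × H is a bijection; equivalently, the inclusion P ↪ H × H induces an isomorphism of profinite completions. -/

import Mathlib

universe xv xw₂

open scoped commutatorElement

/-- Transport "no nontrivial finite quotients" across universes. -/
lemma aux_transport {Q : Type*} [Group Q]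
    (hQ : ∀ (F : Type xv) [Group F] [Finite F] (φ : Q →* F), φ = 1)
    {K : Type xw₂} [Group K] [Finite K] (θ : Q →* K) : ∀ x, θ x = 1 := by
  obtain ⟨n, ⟨e⟩⟩ := Finite.exists_equiv_fin K
  haveI : Small.{xv} K := small_map e
  haveI : Finite (Shrink.{xv} K) := Finite.of_equiv K (equivShrink K)
  let θ' : Q →* Shrink.{xv} K :=
    { toFun := fun q => equivShrink K (θ q)
      map_one' := by
        show equivShrink K (θ 1) = 1
        rw [map_one, ← equivShrink_symm_one (α := K), Equiv.apply_symm_apply]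
      map_mul' := fun a b => by
        show equivShrink K (θ (a * b)) = equivShrink K (θ a) * equivShrink K (θ b)
        rw [map_mul, equivShrink_mul] }
  have h := hQ (Shrink.{xv} K) θ'
  intro x
  have hx : equivShrink K (θ x) = 1 := DFunLike.congr_fun h x
  have : θ x = (equivShrink K).symm 1 := by
    rw [← hx, Equiv.symm_apply_apply]
  rw [this, equivShrink_symm_one]

/-- A homomorphism from `H` to a finite group that kills `ker p` is trivial,
when `Q` has no nontrivial finite quotients. -/
lemma aux_lift_trivial {H Q K : Type*} [Group H] [Group Q] [Group K]
    (p : H →* Q) (hp : Function.Surjective p)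
    (hQ : ∀ θ : Q →* K, ∀ x, θ x = 1)
    (g : H →* K) (hker : p.ker ≤ g.ker) : ∀ x, g x = 1 := by
  intro x
  let θ := p.liftOfRightInverse (Function.surjInv hp) (Function.rightInverse_surjInv hp)
      ⟨g, hker⟩
  have h1 : θ (p x) = g x :=
    p.liftOfRightInverse_comp_apply _ _ ⟨g, hker⟩ x
  rw [← h1]; exact hQ θ (p x)


/-- A finitely generated additive commutative group all of whose finite quotients
are trivial is trivial. -/
lemma aux_fgAdd {A : Type*} [AddCommGroup A] [AddGroup.FG A]
    (hA : ∀ (K : Type) [AddGroup K] [Finite K] (θ : A →+ K), θ = 0) :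
    ∀ a : A, a = 0 := by
  obtain ⟨n, ι, fι, pr, hpr, e, ⟨f⟩⟩ := AddCommGroup.equiv_free_prod_directSum_zmod A
  haveI : ∀ i : ι, NeZero (pr i ^ e i) := fun i =>
    ⟨pow_ne_zero _ (hpr i).ne_zero⟩
  haveI : Finite (DirectSum ι fun i => ZMod (pr i ^ e i)) :=
    Finite.of_equiv _ DFinsupp.equivFunOnFintype.symm
  match n with
  | 0 =>
    haveI : Subsingleton (Fin 0 →₀ ℤ) :=
      ⟨fun a b => Finsupp.ext fun i => i.elim0⟩
    haveI : Finite ((Fin 0 →₀ ℤ) × DirectSum ι fun i => ZMod (pr i ^ e i)) := by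
      have : Finite (Fin 0 →₀ ℤ) := Finite.of_subsingleton
      infer_instance
    have h := hA _ f.toAddMonoidHom
    intro a
    have : f a = 0 := DFunLike.congr_fun h a
    have := congrArg f.symm this
    simpa using this
  | (m+1) =>
    exfalso
    let θ : A →+ ZMod 2 :=
      (Int.castAddHom (ZMod 2)).comp
        (((Finsupp.applyAddHom (0 : Fin (m+1))).comp
          (AddMonoidHom.fst _ _)).comp f.toAddMonoidHom)
    have h := hA _ θ
    have hx := DFunLike.congr_fun h (f.symm (Finsupp.single 0 1, 0))
    simp only [θ, AddMonoidHom.comp_apply, AddMonoidHom.zero_apply,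
      AddEquiv.coe_toAddMonoidHom, AddEquiv.apply_symm_apply] at hx
    rw [show ((AddMonoidHom.fst (Fin (m + 1) →₀ ℤ)
      (DirectSum ι fun i => ZMod (pr i ^ e i))) ((Finsupp.single 0 1 : Fin (m+1) →₀ ℤ), 0))
      = Finsupp.single 0 1 from rfl] at hx
    simp only [Finsupp.applyAddHom_apply, Finsupp.single_eq_same,
      Int.coe_castAddHom, Int.cast_one] at hx
    exact one_ne_zero hx

/-- A finitely generated commutative group all of whose finite quotients
are trivial is trivial. -/
lemma aux_fgComm {A : Type*} [CommGroup A] [Group.FG A]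
    (hA : ∀ (K : Type) [Group K] [Finite K] (θ : A →* K), θ = 1) :
    ∀ a : A, a = 1 := by
  have hAdd : ∀ (K : Type) [AddGroup K] [Finite K] (θ : Additive A →+ K), θ = 0 := by
    intro K _ _ θ
    let θ' : A →* Multiplicative K :=
      { toFun := fun a => Multiplicative.ofAdd (θ (Additive.ofMul a))
        map_one' := by simp
        map_mul' := fun a b => by simp [θ.map_add] }
    have h := hA (Multiplicative K) θ'
    ext a
    have hx := DFunLike.congr_fun h (Additive.toMul a)
    have : Multiplicative.toAdd ((1 : A →* Multiplicative K) (Additive.toMul a)) = 0 := by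
      simp
    rw [← hx] at this
    simp [θ'] at this; exact this
  intro a
  exact aux_fgAdd hAdd (Additive.ofMul a)

set_option maxHeartbeats 2000000 in
/-- Platonov–Tavgen criterion: Let `1 → N → H → Q → 1` be exact with
`N`, `H`, `Q` finitely generated, and let `P ≤ H × H` be the fibre product. If
`H₂(Q,ℤ) = 0` (expressed via Hopf's formula: for every free presentation
`R = ker(F → Q)` one has `R ∩ [F,F] ≤ [F,R]`) and `Q` has no nontrivial finite
quotients, then for every finite group `F` restriction `Hom(H × H, F) → Hom(P, F)`
is a bijection (i.e. `P ↪ H × H` induces an isomorphism of profinite completions). -/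
theorem stmt_7 {H : Type*} {Q : Type u} [Group H] [Group Q]
    [Group.FG H] [Group.FG Q]
    (p : H →* Q) (hp : Function.Surjective p)
    (N : Subgroup H) (hN : p.ker = N) (hNfg : Group.FG N)
    (hH2 : ∀ (ι : Type u) (π : FreeGroup ι →* Q), Function.Surjective π →
      π.ker ⊓ commutator (FreeGroup ι) ≤ ⁅(⊤ : Subgroup (FreeGroup ι)), π.ker⁆)
    (hQhat : ∀ (F : Type v) [Group F] [Finite F] (φ : Q →* F), φ = 1)
    (P : Subgroup (H × H))
    (hP : P = MonoidHom.eqLocus (p.comp (MonoidHom.fst H H)) (p.comp (MonoidHom.snd H H))) :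
    ∀ (F : Type w) [Group F] [Finite F],
      Function.Bijective (fun f : (H × H) →* F => f.comp P.subtype) := by
  classical
  intro F _ _
  have hPm : ∀ z : H × H, z ∈ P ↔ p z.1 = p z.2 := by
    intro z; rw [hP]; exact Iff.rfl
  have hNm : ∀ n : H, n ∈ N ↔ p n = 1 := by
    intro n; rw [← hN]; exact Iff.rfl
  haveI hNnorm : N.Normal := hN ▸ p.normal_ker
  constructor
  · -- injectivity
    intro f g hfg
    simp only at hfg
    have key : ∀ (lam mu : H →* F), (∀ n, n ∈ N → lam n = mu n) → ∀ x, lam x = mu x := by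
      intro lam mu hagree x
      set S := lam.eqLocus mu with hSdef
      have hmemS : ∀ y : H, y ∈ S ↔ lam y = mu y := fun y => Iff.rfl
      have hkerm : (lam.prod mu).ker ≤ S := by
        intro y hy
        rw [MonoidHom.mem_ker, Prod.ext_iff] at hy
        obtain ⟨h1, h2⟩ := hy
        simp only [MonoidHom.prod_apply] at h1 h2
        exact (hmemS y).mpr (h1.trans h2.symm)
      haveI : Finite (H ⧸ (lam.prod mu).ker) :=
        Finite.of_equiv _ (QuotientGroup.quotientKerEquivRange _).symm.toEquiv
      have hKle : (lam.prod mu).ker ≤ S.normalCore :=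
        Subgroup.normal_le_normalCore.mpr hkerm
      haveI : Finite (H ⧸ S.normalCore) := by
        refine Finite.of_surjective
          (QuotientGroup.map ((lam.prod mu).ker) S.normalCore (MonoidHom.id H)
            (by simpa using hKle)) ?_
        intro z
        obtain ⟨x, rfl⟩ := QuotientGroup.mk_surjective z
        exact ⟨(x : H ⧸ (lam.prod mu).ker), QuotientGroup.map_mk _ _ _ _ x⟩
      have hNS : N ≤ S := fun n hn => (hmemS n).mpr (hagree n hn)
      have hNcore : N ≤ S.normalCore := Subgroup.normal_le_normalCore.mpr hNS
      have htriv := aux_lift_trivial p hp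
        (fun θ => aux_transport hQhat θ) (QuotientGroup.mk' S.normalCore)
        (by rw [QuotientGroup.ker_mk', hN]; exact hNcore)
      have hx : x ∈ S.normalCore := by
        rw [← QuotientGroup.eq_one_iff]
        exact htriv x
      exact (hmemS x).mp (S.normalCore_le hx)
    have hmem1 : ∀ n, n ∈ N → ((n, 1) : H × H) ∈ P := by
      intro n hn; rw [hPm]; simp [(hNm n).mp hn]
    have hmem2 : ∀ n, n ∈ N → ((1, n) : H × H) ∈ P := by
      intro n hn; rw [hPm]; simp [(hNm n).mp hn]
    have h1 := key (f.comp (MonoidHom.inl H H)) (g.comp (MonoidHom.inl H H)) (by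
      intro n hn
      have := DFunLike.congr_fun hfg (⟨(n, 1), hmem1 n hn⟩ : P)
      simpa using this)
    have h2 := key (f.comp (MonoidHom.inr H H)) (g.comp (MonoidHom.inr H H)) (by
      intro n hn
      have := DFunLike.congr_fun hfg (⟨(1, n), hmem2 n hn⟩ : P)
      simpa using this)
    ext z
    have hz : z = (z.1, (1 : H)) * ((1 : H), z.2) := by
      simp
    rw [hz, map_mul, map_mul]
    have e1 : f (z.1, (1:H)) = g (z.1, (1:H)) := h1 z.1
    have e2 : f ((1:H), z.2) = g ((1:H), z.2) := h2 z.2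
    rw [e1, e2]
  · -- surjectivity
    intro φ
    show ∃ f : (H × H) →* F, f.comp P.subtype = φ
    -- the diagonal homomorphism into P
    have hδmem : ∀ x : H, ((x, x) : H × H) ∈ P := fun x => (hPm _).mpr rfl
    let δ : H →* P := ((MonoidHom.id H).prod (MonoidHom.id H)).codRestrict P hδmem
    have hj1mem : ∀ n : N, (((n : H), (1 : H)) : H × H) ∈ P := fun n => by
      rw [hPm]; simp [(hNm n).mp n.2]
    have hj2mem : ∀ n : N, (((1 : H), (n : H)) : H × H) ∈ P := fun n => by
      rw [hPm]; simp [(hNm n).mp n.2]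
    let j₁ : N →* P := ((MonoidHom.inl H H).comp N.subtype).codRestrict P hj1mem
    let j₂ : N →* P := ((MonoidHom.inr H H).comp N.subtype).codRestrict P hj2mem
    let G := φ.range
    let ψ : P →* G := φ.rangeRestrict
    have hψ : Function.Surjective ψ := φ.rangeRestrict_surjective
    let A : Subgroup G := (ψ.comp j₁).range
    let B : Subgroup G := (ψ.comp j₂).range
    -- elements of A and B commute
    have hAB : ∀ a, a ∈ A → ∀ b, b ∈ B → Commute a b := by
      rintro _ ⟨n, rfl⟩ _ ⟨m, rfl⟩
      show ψ (j₁ n) * ψ (j₂ m) = ψ (j₂ m) * ψ (j₁ n)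
      rw [← map_mul, ← map_mul]
      congr 1
      apply Subtype.ext
      show ((n : H), (1:H)) * ((1:H), (m : H)) = ((1:H), (m:H)) * ((n:H), (1:H))
      simp [Prod.ext_iff]
    -- the product set A*B is a subgroup
    let SG : Subgroup G :=
      { carrier := {g | ∃ a ∈ A, ∃ b ∈ B, a * b = g}
        one_mem' := ⟨1, one_mem A, 1, one_mem B, mul_one 1⟩
        mul_mem' := by
          rintro x y ⟨a, ha, b, hb, rfl⟩ ⟨a', ha', b', hb', rfl⟩
          refine ⟨a * a', mul_mem ha ha', b * b', mul_mem hb hb', ?_⟩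
          have hc := (hAB a' ha' b hb).symm
          calc a * a' * (b * b') = a * (a' * b) * b' := by group
          _ = a * (b * a') * b' := by rw [hc.eq]
          _ = a * b * (a' * b') := by group
        inv_mem' := by
          rintro x ⟨a, ha, b, hb, rfl⟩
          refine ⟨a⁻¹, inv_mem ha, b⁻¹, inv_mem hb, ?_⟩
          have hc := (hAB a ha b hb)
          rw [mul_inv_rev, hc.inv_inv.eq] }
    have hSGm : ∀ g : G, g ∈ SG ↔ ∃ a ∈ A, ∃ b ∈ B, a * b = g := fun g => Iff.rfl
    -- conjugation stability
    have hconjA : ∀ (q : P) (a : G), a ∈ A → ψ q * a * (ψ q)⁻¹ ∈ A := by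
      rintro q _ ⟨n, rfl⟩
      have hmemN : q.1.1 * (n : H) * q.1.1⁻¹ ∈ N := by
        refine (hNm _).mpr ?_
        have hn := (hNm n).mp n.2
        simp [map_mul, map_inv, hn]
      refine ⟨⟨q.1.1 * (n : H) * q.1.1⁻¹, hmemN⟩, ?_⟩
      · show ψ (j₁ _) = ψ q * ψ (j₁ n) * (ψ q)⁻¹
        have heq : j₁ ⟨q.1.1 * (n : H) * q.1.1⁻¹, hmemN⟩ = q * j₁ n * q⁻¹ := by
          apply Subtype.ext
          show ((q.1.1 * (n:H) * q.1.1⁻¹, (1:H)) : H × H) = q.1 * ((n:H), (1:H)) * (q.1)⁻¹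
          simp [Prod.ext_iff]
        rw [heq, map_mul, map_mul, map_inv]
    have hconjB : ∀ (q : P) (b : G), b ∈ B → ψ q * b * (ψ q)⁻¹ ∈ B := by
      rintro q _ ⟨n, rfl⟩
      have hmemN : q.1.2 * (n : H) * q.1.2⁻¹ ∈ N := by
        refine (hNm _).mpr ?_
        have hn := (hNm n).mp n.2
        simp [map_mul, map_inv, hn]
      refine ⟨⟨q.1.2 * (n : H) * q.1.2⁻¹, hmemN⟩, ?_⟩
      · show ψ (j₂ _) = ψ q * ψ (j₂ n) * (ψ q)⁻¹
        have heq : j₂ ⟨q.1.2 * (n : H) * q.1.2⁻¹, hmemN⟩ = q * j₂ n * q⁻¹ := by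
          apply Subtype.ext
          show (((1:H), q.1.2 * (n:H) * q.1.2⁻¹) : H × H) = q.1 * ((1:H), (n:H)) * (q.1)⁻¹
          simp [Prod.ext_iff]
        rw [heq, map_mul, map_mul, map_inv]
    haveI hSGnorm : SG.Normal := by
      constructor
      rintro x ⟨a, ha, b, hb, rfl⟩ g
      obtain ⟨q, rfl⟩ := hψ g
      refine (hSGm _).mpr ⟨ψ q * a * (ψ q)⁻¹, hconjA q a ha, ψ q * b * (ψ q)⁻¹, hconjB q b hb, ?_⟩
      group
    -- diagonal composite
    let Dφ : H →* G := ψ.comp δ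
    have hδsplit : ∀ (n : H) (hn : n ∈ N), δ n = j₁ ⟨n, hn⟩ * j₂ ⟨n, hn⟩ := by
      intro n hn
      apply Subtype.ext
      show ((n, n) : H × H) = ((n, 1) : H × H) * ((1, n) : H × H)
      simp [Prod.ext_iff]
    -- every diagonal value lies in SG
    have hQstep : ∀ x : H, Dφ x ∈ SG := by
      have hker : p.ker ≤ ((QuotientGroup.mk' SG).comp Dφ).ker := by
        intro n hn
        rw [MonoidHom.mem_ker, MonoidHom.comp_apply]
        rw [show (QuotientGroup.mk' SG) (Dφ n) = (Dφ n : G ⧸ SG) from rfl]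
        rw [QuotientGroup.eq_one_iff]
        have hn' : n ∈ N := hN ▸ hn
        show ψ (δ n) ∈ SG
        rw [hδsplit n hn', map_mul]
        exact (hSGm _).mpr ⟨_, ⟨⟨n, hn'⟩, rfl⟩, _, ⟨⟨n, hn'⟩, rfl⟩, rfl⟩
      have := aux_lift_trivial p hp (fun θ => aux_transport hQhat θ)
        ((QuotientGroup.mk' SG).comp Dφ) hker
      intro x
      have hx := this x
      rw [MonoidHom.comp_apply] at hx
      rw [show (QuotientGroup.mk' SG) (Dφ x) = (Dφ x : G ⧸ SG) from rfl,
        QuotientGroup.eq_one_iff] at hx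
      exact hx
    -- free group presentation
    obtain ⟨nn, Sgen, hcard, hclos⟩ := Group.fg_iff'.mp (inferInstance : Group.FG H)
    let ι : Type u := ULift.{u} (Fin Sgen.card)
    let gen : ι → H := fun i => (Sgen.equivFin.symm i.down : H)
    let π : FreeGroup ι →* H := FreeGroup.lift gen
    have hrangegen : Set.range gen = (Sgen : Set H) := by
      ext x
      constructor
      · rintro ⟨i, rfl⟩; exact (Sgen.equivFin.symm i.down).2
      · intro hx
        exact ⟨⟨Sgen.equivFin ⟨x, hx⟩⟩, by simp [gen]⟩
    have hπ : Function.Surjective π := by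
      rw [← MonoidHom.range_eq_top]
      rw [show π.range = Subgroup.closure (Set.range gen) from FreeGroup.range_lift_eq_closure]
      rw [hrangegen, hclos]
    let ρ : (FreeGroup ι) →* Q := p.comp π
    have hρ : Function.Surjective ρ := by
      intro q; obtain ⟨h, rfl⟩ := hp q; obtain ⟨w, rfl⟩ := hπ h; exact ⟨w, rfl⟩
    let R : Subgroup (FreeGroup ι) := ρ.ker
    have hRm : ∀ w : FreeGroup ι, w ∈ R ↔ π w ∈ N := by
      intro w
      rw [hNm]
      exact Iff.rfl
    have hopf := hH2 ι ρ hρ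
    -- perfectness of Q transfers: FreeGroup ι = R ⊔ commutator
    have hQperf : commutator Q = ⊤ := by
      have hofsurj : Function.Surjective (Abelianization.of (G := Q)) := fun y =>
        Quotient.exists_rep y
      have hAbFG : Group.FG (Abelianization Q) :=
        Group.fg_of_surjective (G := Q) (f := Abelianization.of) hofsurj
      have htrivAb : ∀ (K : Type) [Group K] [Finite K] (θ : Abelianization Q →* K), θ = 1 := by
        intro K _ _ θ
        have h1 : ∀ x : Q, θ (Abelianization.of x) = 1 :=
          aux_transport hQhat (θ.comp Abelianization.of)
        ext y
        exact h1 y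
      haveI := hAbFG
      have hall := aux_fgComm htrivAb
      rw [Subgroup.eq_top_iff']
      intro q
      have : Abelianization.of q = 1 := hall _
      exact (QuotientGroup.eq_one_iff q).mp this
    have hperf : R ⊔ commutator (FreeGroup ι) = ⊤ := by
      rw [Subgroup.eq_top_iff']
      intro w
      have hcw : ρ w ∈ commutator Q := hQperf ▸ Subgroup.mem_top _
      have hmapcomm : Subgroup.map ρ (commutator (FreeGroup ι)) = commutator Q := by
        rw [commutator_def, Subgroup.map_commutator, Subgroup.map_top_of_surjective ρ hρ,
          commutator_def]
      rw [← hmapcomm] at hcw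
      obtain ⟨z, hz, hzw⟩ := hcw
      have : w * z⁻¹ ∈ R := by
        rw [MonoidHom.mem_ker, map_mul, map_inv, hzw]
        group
      have hw : w = (w * z⁻¹) * z := by group
      rw [hw]
      exact Subgroup.mul_mem _ (Subgroup.mem_sup_left this) (Subgroup.mem_sup_right hz)
    -- choose decompositions on generators
    have hgen : ∀ i : ι, ∃ a ∈ A, ∃ b ∈ B, a * b = Dφ (π (FreeGroup.of i)) :=
      fun i => (hSGm _).mp (hQstep _)
    choose av haA bv hbB hab using hgen
    let αh : FreeGroup ι →* A := FreeGroup.lift (fun i => ⟨av i, haA i⟩)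
    let βh : FreeGroup ι →* B := FreeGroup.lift (fun i => ⟨bv i, hbB i⟩)
    let αt : FreeGroup ι →* G := A.subtype.comp αh
    let βt : FreeGroup ι →* G := B.subtype.comp βh
    have hαA : ∀ w, αt w ∈ A := fun w => (αh w).2
    have hβB : ∀ w, βt w ∈ B := fun w => (βh w).2
    have hαβ : ∀ w, αt w * βt w = Dφ (π w) := by
      let μ2 : FreeGroup ι →* G :=
        { toFun := fun w => αt w * βt w
          map_one' := by simp
          map_mul' := by
            intro w v
            have hc := (hAB (αt v) (hαA v) (βt w) (hβB w)).symm
            show αt (w * v) * βt (w * v) = (αt w * βt w) * (αt v * βt v)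
            rw [map_mul, map_mul]
            calc αt w * αt v * (βt w * βt v) = αt w * (αt v * βt w) * βt v := by group
            _ = αt w * (βt w * αt v) * βt v := by rw [hc.eq]
            _ = (αt w * βt w) * (αt v * βt v) := by group }
      have : μ2 = Dφ.comp π := by
        apply FreeGroup.ext_hom
        intro i
        show αt (FreeGroup.of i) * βt (FreeGroup.of i) = Dφ (π (FreeGroup.of i))
        have h1 : αt (FreeGroup.of i) = av i := by
          show (A.subtype) (αh (FreeGroup.of i)) = av i
          rw [show αh (FreeGroup.of i) = ⟨av i, haA i⟩ from FreeGroup.lift_apply_of]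
          rfl
        have h2 : βt (FreeGroup.of i) = bv i := by
          show (B.subtype) (βh (FreeGroup.of i)) = bv i
          rw [show βh (FreeGroup.of i) = ⟨bv i, hbB i⟩ from FreeGroup.lift_apply_of]
          rfl
        rw [h1, h2, hab]
      intro w
      exact DFunLike.congr_fun this w
    -- the central subgroup C = A ⊓ B
    let C : Subgroup G := A ⊓ B
    letI : CommGroup C :=
      { (inferInstance : Group C) with
        mul_comm := fun x y => Subtype.ext
          ((hAB x.1 (Subgroup.mem_inf.mp x.2).1 y.1 (Subgroup.mem_inf.mp y.2).2).eq) }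
    haveI hRn : R.Normal := ρ.normal_ker
    -- the discrepancy map d : R → C
    let df : R → G := fun w => (ψ (j₁ ⟨π w.1, (hRm _).mp w.2⟩))⁻¹ * αt w.1
    have hψj1A : ∀ n : N, ψ (j₁ n) ∈ A := fun n => ⟨n, rfl⟩
    have hψj2B : ∀ n : N, ψ (j₂ n) ∈ B := fun n => ⟨n, rfl⟩
    have hDφsplit : ∀ (n : H) (hn : n ∈ N),
        Dφ n = ψ (j₁ ⟨n, hn⟩) * ψ (j₂ ⟨n, hn⟩) := by
      intro n hn
      show ψ (δ n) = _
      rw [hδsplit n hn, map_mul]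
    have hdfA : ∀ w : R, df w ∈ A := fun w => mul_mem (inv_mem (hψj1A _)) (hαA _)
    have hdfeq : ∀ w : R, df w = ψ (j₂ ⟨π w.1, (hRm _).mp w.2⟩) * (βt w.1)⁻¹ := by
      intro w
      have h := hαβ w.1
      have h2 := hDφsplit (π w.1) ((hRm _).mp w.2)
      have h4 : αt w.1 = ψ (j₁ ⟨π w.1, (hRm _).mp w.2⟩) *
          ψ (j₂ ⟨π w.1, (hRm _).mp w.2⟩) * (βt w.1)⁻¹ :=
        eq_mul_inv_iff_mul_eq.mpr (h.trans h2)
      show (ψ (j₁ ⟨π w.1, (hRm _).mp w.2⟩))⁻¹ * αt w.1 = _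
      rw [h4]; group
    have hdfB : ∀ w : R, df w ∈ B := fun w => by
      rw [hdfeq w]; exact mul_mem (hψj2B _) (inv_mem (hβB _))
    have hdfC : ∀ w : R, df w ∈ C := fun w => Subgroup.mem_inf.mpr ⟨hdfA w, hdfB w⟩
    have hj1mul : ∀ (n m : N), j₁ (n * m) = j₁ n * j₁ m := fun n m => map_mul _ _ _
    -- d is a homomorphism
    have hdmul : ∀ w v : R, df (w * v) = df w * df v := by
      intro w v
      have hnn : (⟨π (w * v).1, (hRm _).mp (w * v).2⟩ : N)
          = ⟨π w.1, (hRm _).mp w.2⟩ * ⟨π v.1, (hRm _).mp v.2⟩ := by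
        apply Subtype.ext; show π ((w : FreeGroup ι) * v) = π w.1 * π v.1
        exact map_mul _ _ _
      show (ψ (j₁ _))⁻¹ * αt ((w : FreeGroup ι) * v) = df w * df v
      rw [hnn, hj1mul, map_mul, map_mul]
      have hcomm1 : (ψ (j₁ ⟨π v.1, (hRm _).mp v.2⟩))⁻¹ * df w
          = df w * (ψ (j₁ ⟨π v.1, (hRm _).mp v.2⟩))⁻¹ :=
        (hAB _ (inv_mem (hψj1A _)) _ (hdfB w)).eq
      calc (ψ (j₁ ⟨π w.1, (hRm _).mp w.2⟩) * ψ (j₁ ⟨π v.1, (hRm _).mp v.2⟩))⁻¹ *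
            (αt w.1 * αt v.1)
          = (ψ (j₁ ⟨π v.1, (hRm _).mp v.2⟩))⁻¹ * df w * αt v.1 := by
            show _ = (ψ (j₁ ⟨π v.1, (hRm _).mp v.2⟩))⁻¹ *
              ((ψ (j₁ ⟨π w.1, (hRm _).mp w.2⟩))⁻¹ * αt w.1) * αt v.1
            group
        _ = df w * ((ψ (j₁ ⟨π v.1, (hRm _).mp v.2⟩))⁻¹ * αt v.1) := by
            rw [hcomm1]; group
        _ = df w * df v := rfl
    let d : R →* C :=
      { toFun := fun w => ⟨df w, hdfC w⟩
        map_one' := by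
          apply Subtype.ext
          show (ψ (j₁ ⟨π (1 : R).1, _⟩))⁻¹ * αt (1 : R).1 = 1
          have h1 : (⟨π (1 : R).1, (hRm _).mp (1 : R).2⟩ : N) = 1 := by
            apply Subtype.ext; show π (1 : FreeGroup ι) = 1; exact map_one _
          rw [h1]
          show (ψ (j₁ 1))⁻¹ * αt (1 : FreeGroup ι) = 1
          rw [map_one, map_one, map_one]; group
        map_mul' := fun w v => Subtype.ext (hdmul w v) }
    -- d is conjugation invariant
    have hdconj : ∀ (u r : FreeGroup ι) (hr : r ∈ R) (hr' : u * r * u⁻¹ ∈ R),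
        df ⟨u * r * u⁻¹, hr'⟩ = df ⟨r, hr⟩ := by
      intro u r hr hr'
      have hj1conj : j₁ ⟨π (u * r * u⁻¹), (hRm _).mp hr'⟩
          = δ (π u) * j₁ ⟨π r, (hRm _).mp hr⟩ * (δ (π u))⁻¹ := by
        apply Subtype.ext
        show ((π (u * r * u⁻¹), (1 : H)) : H × H)
          = (π u, π u) * (π r, 1) * ((π u, π u))⁻¹
        simp [Prod.ext_iff, map_mul, map_inv, mul_assoc]
      show (ψ (j₁ _))⁻¹ * αt (u * r * u⁻¹) = df ⟨r, hr⟩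
      rw [hj1conj, map_mul, map_mul, map_inv]
      have hDu : ψ (δ (π u)) = αt u * βt u := (hαβ u).symm
      rw [show ψ (δ (π u)) = Dφ (π u) from rfl] at hDu ⊢
      rw [hDu, map_mul, map_mul, map_inv]
      set a := αt u
      set b := βt u
      set s := ψ (j₁ (⟨π r, (hRm _).mp hr⟩ : N))
      set t := αt r
      have e1 : s⁻¹ * b = b * s⁻¹ := ((hAB s (hψj1A _) b (hβB u)).inv_left).eq
      have e2 : a * (s⁻¹ * t) = (s⁻¹ * t) * a := by
        have : Commute a (s⁻¹ * t) := hAB a (hαA u) (s⁻¹ * t) (hdfB ⟨r, hr⟩)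
        exact this.eq
      show (a * b * s * (a * b)⁻¹)⁻¹ * (a * t * a⁻¹) = s⁻¹ * t
      rw [show (a * b * s * (a * b)⁻¹)⁻¹ * (a * t * a⁻¹)
          = a * (b * s⁻¹ * b⁻¹) * (t * a⁻¹) by group]
      rw [show b * s⁻¹ * b⁻¹ = s⁻¹ by rw [← e1]; group]
      rw [show a * s⁻¹ * (t * a⁻¹) = a * (s⁻¹ * t) * a⁻¹ by group]
      rw [e2]
      group
    -- d kills ⁅⊤, R⁆
    have hTRle : ⁅(⊤ : Subgroup (FreeGroup ι)), R⁆ ≤ R :=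
      Subgroup.commutator_le_right ⊤ R
    have hdkill : ∀ (x : FreeGroup ι) (hx : x ∈ ⁅(⊤ : Subgroup (FreeGroup ι)), R⁆)
        (hxR : x ∈ R), df ⟨x, hxR⟩ = 1 := by
      have hgen : ∀ (x : FreeGroup ι)
          (hx : x ∈ {g | ∃ g₁ ∈ (⊤ : Subgroup (FreeGroup ι)), ∃ g₂ ∈ R, ⁅g₁, g₂⁆ = g})
          (hxR : x ∈ R), df ⟨x, hxR⟩ = 1 := by
        rintro x ⟨u, -, r, hr, rfl⟩ hxR
        have h1 : u * r * u⁻¹ ∈ R := hRn.conj_mem r hr u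
        have heq : (⟨⁅u, r⁆, hxR⟩ : R) = ⟨u * r * u⁻¹, h1⟩ * (⟨r, hr⟩ : R)⁻¹ := by
          apply Subtype.ext
          show ⁅u, r⁆ = (u * r * u⁻¹) * r⁻¹
          rw [commutatorElement_def]
        have : df ⟨⁅u, r⁆, hxR⟩ = df (⟨u * r * u⁻¹, h1⟩ * (⟨r, hr⟩ : R)⁻¹) := by rw [heq]
        rw [this]
        have hstep : ∀ w v : R, df (w * v⁻¹) = df w * (df v)⁻¹ := by
          intro w v
          have h2 := hdmul (w * v⁻¹) v
          rw [inv_mul_cancel_right] at h2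
          rw [eq_comm, ← eq_mul_inv_iff_mul_eq] at h2
          rw [← h2]
        rw [hstep, hdconj u r hr h1]
        group
      intro x hx
      rw [Subgroup.commutator_def] at hx
      refine Subgroup.closure_induction
        (p := fun g _ => ∀ hg : g ∈ R, df ⟨g, hg⟩ = 1) (fun y hy => hgen y hy) ?_ ?_ ?_ hx
      · intro h1
        have : (⟨(1 : FreeGroup ι), h1⟩ : R) = 1 := Subtype.ext rfl
        rw [this]
        exact Subtype.ext_iff.mp (d.map_one)
      · intro x y hxc hyc hxp hyp hxy
        have hxR : x ∈ R := hTRle (by rw [Subgroup.commutator_def]; exact hxc)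
        have hyR : y ∈ R := hTRle (by rw [Subgroup.commutator_def]; exact hyc)
        have : (⟨x * y, hxy⟩ : R) = ⟨x, hxR⟩ * ⟨y, hyR⟩ := Subtype.ext rfl
        rw [this, hdmul, hxp hxR, hyp hyR, one_mul]
      · intro x hxc hxp hxinv
        have hxR : x ∈ R := hTRle (by rw [Subgroup.commutator_def]; exact hxc)
        have : (⟨x⁻¹, hxinv⟩ : R) = (⟨x, hxR⟩ : R)⁻¹ := Subtype.ext rfl
        rw [this]
        have h2 := hdmul ⟨x, hxR⟩ (⟨x, hxR⟩ : R)⁻¹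
        rw [mul_inv_cancel] at h2
        have h3 : df (1 : R) = 1 := Subtype.ext_iff.mp (d.map_one)
        rw [h3, hxp hxR, one_mul] at h2
        exact h2.symm
    -- lift d to the abelianization using Hopf's formula
    let qq : R →* Abelianization (FreeGroup ι) := (Abelianization.of).comp R.subtype
    have hofsurj2 : Function.Surjective (Abelianization.of (G := FreeGroup ι)) := fun z =>
      Quotient.exists_rep z
    have hqsurj : Function.Surjective qq := by
      intro z
      obtain ⟨uu, rfl⟩ := hofsurj2 z
      have huu : uu ∈ ((R ⊔ commutator (FreeGroup ι) : Subgroup (FreeGroup ι)) : Set (FreeGroup ι)) := by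
        rw [hperf]; trivial
      rw [Subgroup.mul_normal] at huu
      obtain ⟨r, hr, z0, hz0, rfl⟩ := huu
      refine ⟨⟨r, hr⟩, ?_⟩
      show Abelianization.of r = Abelianization.of (r * z0)
      rw [map_mul]
      have : Abelianization.of z0 = 1 := (QuotientGroup.eq_one_iff z0).mpr hz0
      rw [this, mul_one]
    have hkerq : qq.ker ≤ d.ker := by
      intro w hw
      have hwc : (w : FreeGroup ι) ∈ commutator (FreeGroup ι) := by
        rw [MonoidHom.mem_ker] at hw
        have : Abelianization.of (w : FreeGroup ι) = 1 := hw
        exact (QuotientGroup.eq_one_iff _).mp this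
      have hwTR : (w : FreeGroup ι) ∈ ⁅(⊤ : Subgroup (FreeGroup ι)), R⁆ :=
        hopf (Subgroup.mem_inf.mpr ⟨w.2, hwc⟩)
      rw [MonoidHom.mem_ker]
      apply Subtype.ext
      show df ⟨(w : FreeGroup ι), w.2⟩ = 1
      exact hdkill _ hwTR w.2
    let Dbar : Abelianization (FreeGroup ι) →* C :=
      qq.liftOfRightInverse (Function.surjInv hqsurj) (Function.rightInverse_surjInv hqsurj)
        ⟨d, hkerq⟩
    have hDbar : ∀ w : R, Dbar (qq w) = d w := fun w =>
      qq.liftOfRightInverse_comp_apply _ _ ⟨d, hkerq⟩ w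
    let Dh : FreeGroup ι →* C := Dbar.comp Abelianization.of
    have hDR : ∀ (w : FreeGroup ι) (hw : w ∈ R), Dh w = d ⟨w, hw⟩ := by
      intro w hw
      show Dbar (Abelianization.of w) = d ⟨w, hw⟩
      rw [show Abelianization.of w = qq ⟨w, hw⟩ from rfl]
      exact hDbar ⟨w, hw⟩
    let DG : FreeGroup ι →* G := C.subtype.comp Dh
    have hDGA : ∀ w, DG w ∈ A := fun w => (Subgroup.mem_inf.mp (Dh w).2).1
    have hDGB : ∀ w, DG w ∈ B := fun w => (Subgroup.mem_inf.mp (Dh w).2).2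
    -- the corrected homomorphisms
    let αf : FreeGroup ι →* G :=
      { toFun := fun w => αt w * (DG w)⁻¹
        map_one' := by show αt 1 * (DG 1)⁻¹ = 1; rw [map_one, map_one]; group
        map_mul' := by
          intro w v
          show αt (w * v) * (DG (w * v))⁻¹ = (αt w * (DG w)⁻¹) * (αt v * (DG v)⁻¹)
          rw [map_mul, map_mul]
          have e1 : (DG w)⁻¹ * αt v = αt v * (DG w)⁻¹ :=
            ((hAB (αt v) (hαA v) (DG w) (hDGB w)).inv_right).symm.eq
          have e2 : (DG v)⁻¹ * (DG w)⁻¹ = (DG w)⁻¹ * (DG v)⁻¹ :=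
            ((hAB ((DG w)⁻¹) (inv_mem (hDGA w)) ((DG v)⁻¹) (inv_mem (hDGB v))).eq).symm
          calc αt w * αt v * (DG w * DG v)⁻¹
              = αt w * αt v * ((DG v)⁻¹ * (DG w)⁻¹) := by rw [mul_inv_rev]
            _ = αt w * αt v * ((DG w)⁻¹ * (DG v)⁻¹) := by rw [e2]
            _ = αt w * (αt v * (DG w)⁻¹) * (DG v)⁻¹ := by group
            _ = αt w * ((DG w)⁻¹ * αt v) * (DG v)⁻¹ := by rw [e1]
            _ = (αt w * (DG w)⁻¹) * (αt v * (DG v)⁻¹) := by group }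
    let βf : FreeGroup ι →* G :=
      { toFun := fun w => DG w * βt w
        map_one' := by show DG 1 * βt 1 = 1; rw [map_one, map_one]; group
        map_mul' := by
          intro w v
          show DG (w * v) * βt (w * v) = (DG w * βt w) * (DG v * βt v)
          rw [map_mul, map_mul]
          have e1 : DG v * βt w = βt w * DG v :=
            ((hAB (DG v) (hDGA v) (βt w) (hβB w)).eq)
          calc DG w * DG v * (βt w * βt v)
              = DG w * (DG v * βt w) * βt v := by group
            _ = DG w * (βt w * DG v) * βt v := by rw [e1]
            _ = (DG w * βt w) * (DG v * βt v) := by group }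
    have hαfR : ∀ (w : FreeGroup ι) (hw : w ∈ R),
        αf w = ψ (j₁ ⟨π w, (hRm _).mp hw⟩) := by
      intro w hw
      show αt w * (DG w)⁻¹ = _
      have h1 : DG w = df ⟨w, hw⟩ := by
        show C.subtype (Dh w) = _
        rw [hDR w hw]; rfl
      rw [h1]
      show αt w * ((ψ (j₁ ⟨π w, (hRm _).mp hw⟩))⁻¹ * αt w)⁻¹ = _
      group
    have hβfR : ∀ (w : FreeGroup ι) (hw : w ∈ R),
        βf w = ψ (j₂ ⟨π w, (hRm _).mp hw⟩) := by
      intro w hw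
      show DG w * βt w = _
      have h1 : DG w = df ⟨w, hw⟩ := by
        show C.subtype (Dh w) = _
        rw [hDR w hw]; rfl
      rw [h1]
      show (ψ (j₁ ⟨π w, (hRm _).mp hw⟩))⁻¹ * αt w * βt w = _
      rw [mul_assoc, hαβ w, hDφsplit (π w) ((hRm _).mp hw)]
      group
    have hwR_of_ker : ∀ w : FreeGroup ι, w ∈ π.ker → w ∈ R := by
      intro w hw
      rw [MonoidHom.mem_ker] at hw ⊢
      show p (π w) = 1
      rw [hw, map_one]
    have hkerα : π.ker ≤ αf.ker := by
      intro w hw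
      have hwR := hwR_of_ker w hw
      rw [MonoidHom.mem_ker, hαfR w hwR]
      have : (⟨π w, (hRm _).mp hwR⟩ : N) = 1 := by
        apply Subtype.ext
        exact hw
      rw [this, map_one, map_one]
    have hkerβ : π.ker ≤ βf.ker := by
      intro w hw
      have hwR := hwR_of_ker w hw
      rw [MonoidHom.mem_ker, hβfR w hwR]
      have : (⟨π w, (hRm _).mp hwR⟩ : N) = 1 := by
        apply Subtype.ext
        exact hw
      rw [this, map_one, map_one]
    let a : H →* G := π.liftOfRightInverse (Function.surjInv hπ)
      (Function.rightInverse_surjInv hπ) ⟨αf, hkerα⟩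
    let b : H →* G := π.liftOfRightInverse (Function.surjInv hπ)
      (Function.rightInverse_surjInv hπ) ⟨βf, hkerβ⟩
    have ha : ∀ w, a (π w) = αf w := fun w =>
      π.liftOfRightInverse_comp_apply _ _ ⟨αf, hkerα⟩ w
    have hb : ∀ w, b (π w) = βf w := fun w =>
      π.liftOfRightInverse_comp_apply _ _ ⟨βf, hkerβ⟩ w
    have hmemA : ∀ x, a x ∈ A := by
      intro x; obtain ⟨w, rfl⟩ := hπ x
      rw [ha]
      exact mul_mem (hαA w) (inv_mem (hDGA w))
    have hmemB : ∀ x, b x ∈ B := by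
      intro x; obtain ⟨w, rfl⟩ := hπ x
      rw [hb]
      exact mul_mem (hDGB w) (hβB w)
    have hcomm : ∀ x y, Commute (a x) (b y) := fun x y => hAB _ (hmemA x) _ (hmemB y)
    have hdiag : ∀ x, a x * b x = Dφ x := by
      intro x; obtain ⟨w, rfl⟩ := hπ x
      rw [ha, hb]
      show (αt w * (DG w)⁻¹) * (DG w * βt w) = Dφ (π w)
      rw [← hαβ w]; group
    have haN : ∀ (n : H) (hn : n ∈ N), a n = ψ (j₁ ⟨n, hn⟩) := by
      intro n hn
      obtain ⟨w, hw⟩ := hπ n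
      have hwR : w ∈ R := by
        rw [MonoidHom.mem_ker]
        show p (π w) = 1
        rw [hw]; exact (hNm n).mp hn
      have h1 : a n = αf w := by rw [← hw]; exact ha w
      rw [h1, hαfR w hwR]
      have h2 : (⟨π w, (hRm _).mp hwR⟩ : N) = ⟨n, hn⟩ := Subtype.ext hw
      rw [h2]
    have hbN : ∀ (n : H) (hn : n ∈ N), b n = ψ (j₂ ⟨n, hn⟩) := by
      intro n hn
      obtain ⟨w, hw⟩ := hπ n
      have hwR : w ∈ R := by
        rw [MonoidHom.mem_ker]
        show p (π w) = 1
        rw [hw]; exact (hNm n).mp hn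
      have h1 : b n = βf w := by rw [← hw]; exact hb w
      rw [h1, hβfR w hwR]
      have h2 : (⟨π w, (hRm _).mp hwR⟩ : N) = ⟨n, hn⟩ := Subtype.ext hw
      rw [h2]
    -- assemble the extension
    let f0 : (H × H) →* G := MonoidHom.noncommCoprod a b hcomm
    refine ⟨G.subtype.comp f0, ?_⟩
    ext z
    show G.subtype (f0 (z : H × H)) = φ z
    have hz2 : p z.1.1 = p z.1.2 := (hPm z.1).mp z.2
    have hnmem : z.1.1⁻¹ * z.1.2 ∈ N := by
      rw [hNm, map_mul, map_inv, hz2]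
      group
    have hzsplit : (z : P) = δ z.1.1 * j₂ ⟨z.1.1⁻¹ * z.1.2, hnmem⟩ := by
      apply Subtype.ext
      show (z : H × H) = (z.1.1, z.1.1) * (1, z.1.1⁻¹ * z.1.2)
      have : (z : H × H) = (z.1.1, z.1.2) := rfl
      rw [this]
      simp [Prod.ext_iff]
    have hf0 : f0 (z : H × H) = a z.1.1 * b z.1.2 := rfl
    have hy : z.1.2 = z.1.1 * (z.1.1⁻¹ * z.1.2) := by group
    have hψz : ψ z = ψ (δ z.1.1) * ψ (j₂ ⟨z.1.1⁻¹ * z.1.2, hnmem⟩) := by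
      conv_lhs => rw [hzsplit]
      rw [map_mul]
    have hbz : b z.1.2 = b z.1.1 * ψ (j₂ ⟨z.1.1⁻¹ * z.1.2, hnmem⟩) := by
      conv_lhs => rw [hy]
      rw [map_mul, hbN _ hnmem]
    have hcalc : f0 (z : H × H) = ψ z := by
      rw [hf0, hbz, hψz, ← mul_assoc, hdiag]
      rfl
    rw [hcalc]
    rfl
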